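/- Let n > e⁶ and 1 ≤ δ ≤ 2 be real, and define f(t) = √(n(2 log t − δ)) on [√n, n]. Then: (i) f maps [√n, n] into (√n, n); (ii) f is increasing with f'(t) ≤ 1/2; (iii) the equation t = f(t) has a unique root R in (√n, n), and R < f(t) < t for R < t ≤ n while t < f(t) < R for √n ≤ t < R. -/

import Mathlib

noncomputable def fIter (n δ t : ℝ) : ℝ := Real.sqrt (n * (2 * Real.log t - δ))

private lemma key17 {n δ t : ℝ} (hn : Real.exp 6 < n) (hδ2 : δ ≤ 2)
    (ht : Real.sqrt n ≤ t) : 4 < 2 * Real.log t - δ := by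
  have hn0 : 0 < n := (Real.exp_pos 6).trans hn
  have hlogn : 6 < Real.log n := by
    have := Real.log_lt_log (Real.exp_pos 6) hn
    rwa [Real.log_exp] at this
  have hs0 : 0 < Real.sqrt n := Real.sqrt_pos.mpr hn0
  have h1 : Real.log (Real.sqrt n) ≤ Real.log t := Real.log_le_log hs0 ht
  rw [Real.log_sqrt hn0.le] at h1
  linarith

private lemma deriv17 {n δ t : ℝ} (hn : Real.exp 6 < n) (hδ2 : δ ≤ 2)
    (ht : Real.sqrt n ≤ t) :
    HasDerivAt (fIter n δ) (Real.sqrt n / (t * Real.sqrt (2 * Real.log t - δ))) t := by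
  have hn0 : 0 < n := (Real.exp_pos 6).trans hn
  have ht0 : 0 < t := lt_of_lt_of_le (Real.sqrt_pos.mpr hn0) ht
  have hk := key17 hn hδ2 ht
  have hg : HasDerivAt (fun t => n * (2 * Real.log t - δ)) (n * (2 * t⁻¹)) t :=
    (((Real.hasDerivAt_log ht0.ne').const_mul 2).sub_const δ).const_mul n
  have hne : n * (2 * Real.log t - δ) ≠ 0 := ne_of_gt (by nlinarith)
  have h := hg.sqrt hne
  convert h using 1
  · rfl
  rw [Real.sqrt_mul hn0.le]
  have hss : Real.sqrt n * Real.sqrt n = n := Real.mul_self_sqrt hn0.le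
  have hq0 : 0 < Real.sqrt (2 * Real.log t - δ) := Real.sqrt_pos.mpr (by linarith)
  have hs0 : 0 < Real.sqrt n := Real.sqrt_pos.mpr hn0
  field_simp
  rw [← hss]; ring_nf
  rw [Real.sqrt_sq hs0.le]

theorem stmt17 (n δ : ℝ) (hn : Real.exp 6 < n) (hδ1 : 1 ≤ δ) (hδ2 : δ ≤ 2) :
    (∀ t ∈ Set.Icc (Real.sqrt n) n, fIter n δ t ∈ Set.Ioo (Real.sqrt n) n) ∧
    StrictMonoOn (fIter n δ) (Set.Icc (Real.sqrt n) n) ∧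
    (∀ t ∈ Set.Icc (Real.sqrt n) n,
      HasDerivAt (fIter n δ) (Real.sqrt n / (t * Real.sqrt (2 * Real.log t - δ))) t ∧
      Real.sqrt n / (t * Real.sqrt (2 * Real.log t - δ)) ≤ 1 / 2) ∧
    (∃! R : ℝ, R ∈ Set.Ioo (Real.sqrt n) n ∧ fIter n δ R = R) ∧
    (∀ R ∈ Set.Ioo (Real.sqrt n) n, fIter n δ R = R →
      (∀ t : ℝ, R < t → t ≤ n → R < fIter n δ t ∧ fIter n δ t < t) ∧
      (∀ t : ℝ, Real.sqrt n ≤ t → t < R → t < fIter n δ t ∧ fIter n δ t < R)) := by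
  have hn0 : 0 < n := (Real.exp_pos 6).trans hn
  have h1n : 1 < n := by nlinarith [Real.add_one_le_exp (6:ℝ)]
  have hsn_lt : Real.sqrt n < n := by rw [Real.sqrt_lt' hn0]; nlinarith
  have hs0 : 0 < Real.sqrt n := Real.sqrt_pos.mpr hn0
  have hss : Real.sqrt n * Real.sqrt n = n := Real.mul_self_sqrt hn0.le
  -- part (i)
  have hmem : ∀ t ∈ Set.Icc (Real.sqrt n) n, fIter n δ t ∈ Set.Ioo (Real.sqrt n) n := by
    rintro t ⟨ht1, ht2⟩
    have hk := key17 hn hδ2 ht1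
    have ht0 : 0 < t := lt_of_lt_of_le hs0 ht1
    constructor
    · exact Real.sqrt_lt_sqrt hn0.le (by nlinarith)
    · rw [fIter, Real.sqrt_lt' hn0]
      have hlt : Real.log t ≤ Real.log n := Real.log_le_log ht0 ht2
      have h2 : Real.log n ≤ 2 * (Real.sqrt n - 1) := by
        have := Real.log_le_sub_one_of_pos hs0
        rw [Real.log_sqrt hn0.le] at this; linarith
      nlinarith [sq_nonneg (Real.sqrt n - 2)]
  -- strict mono
  have hmono : StrictMonoOn (fIter n δ) (Set.Icc (Real.sqrt n) n) := by
    intro a ha b hb hab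
    have ha0 : 0 < a := lt_of_lt_of_le hs0 ha.1
    have hka := key17 hn hδ2 ha.1
    apply Real.sqrt_lt_sqrt (by nlinarith)
    have hl : Real.log a < Real.log b := Real.log_lt_log ha0 hab
    nlinarith
  -- derivative
  have hderiv : ∀ t ∈ Set.Icc (Real.sqrt n) n,
      HasDerivAt (fIter n δ) (Real.sqrt n / (t * Real.sqrt (2 * Real.log t - δ))) t ∧
      Real.sqrt n / (t * Real.sqrt (2 * Real.log t - δ)) ≤ 1 / 2 := by
    rintro t ⟨ht1, ht2⟩
    have ht0 : 0 < t := lt_of_lt_of_le hs0 ht1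
    have hk := key17 hn hδ2 ht1
    have hq : 2 < Real.sqrt (2 * Real.log t - δ) := by
      have h4 : Real.sqrt 4 = 2 := by
        rw [show (4:ℝ) = 2 ^ 2 by norm_num, Real.sqrt_sq (by norm_num : (0:ℝ) ≤ 2)]
      calc (2:ℝ) = Real.sqrt 4 := h4.symm
        _ < _ := Real.sqrt_lt_sqrt (by norm_num) hk
    refine ⟨deriv17 hn hδ2 ht1, ?_⟩
    rw [div_le_div_iff₀ (by nlinarith) (by norm_num)]
    nlinarith [Real.sqrt_nonneg n]
  -- Lipschitz
  have hlip : ∀ x ∈ Set.Icc (Real.sqrt n) n, ∀ y ∈ Set.Icc (Real.sqrt n) n,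
      |fIter n δ y - fIter n δ x| ≤ (1/2) * |y - x| := by
    intro x hx y hy
    have := Convex.norm_image_sub_le_of_norm_hasDerivWithin_le
      (f := fIter n δ)
      (f' := fun t => Real.sqrt n / (t * Real.sqrt (2 * Real.log t - δ)))
      (C := 1/2) (s := Set.Icc (Real.sqrt n) n)
      (fun z hz => ((hderiv z hz).1).hasDerivWithinAt)
      (fun z hz => by
        rw [Real.norm_eq_abs, abs_of_nonneg (div_nonneg (Real.sqrt_nonneg _)
          (mul_nonneg (le_trans (Real.sqrt_nonneg n) hz.1) (Real.sqrt_nonneg _)))]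
        exact (hderiv z hz).2)
      (convex_Icc _ _) hx hy
    simpa [Real.norm_eq_abs] using this
  -- existence of fixed point
  have hcont : ContinuousOn (fun t => fIter n δ t - t) (Set.Icc (Real.sqrt n) n) := by
    apply ContinuousOn.sub _ continuousOn_id
    have hlogc : ContinuousOn Real.log (Set.Icc (Real.sqrt n) n) := fun x hx =>
      (Real.continuousAt_log (ne_of_gt (lt_of_lt_of_le hs0 hx.1))).continuousWithinAt
    exact (continuousOn_const.mul ((continuousOn_const.mul hlogc).sub
      continuousOn_const)).sqrt
  have hIV : ∃ R ∈ Set.Ioo (Real.sqrt n) n, fIter n δ R = R := by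
    have h1 := hmem (Real.sqrt n) ⟨le_refl _, hsn_lt.le⟩
    have h2 := hmem n ⟨hsn_lt.le, le_refl _⟩
    have h0 : (0:ℝ) ∈ Set.Ioo ((fun t => fIter n δ t - t) n)
        ((fun t => fIter n δ t - t) (Real.sqrt n)) := by
      constructor
      · simp only; linarith [h2.2]
      · simp only; linarith [h1.1]
    obtain ⟨R, hR, hR0⟩ := intermediate_value_Ioo' hsn_lt.le hcont h0
    exact ⟨R, hR, by simp only at hR0; linarith⟩
  obtain ⟨R, hRmem, hRfix⟩ := hIV
  have hRIcc : R ∈ Set.Icc (Real.sqrt n) n := ⟨hRmem.1.le, hRmem.2.le⟩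
  refine ⟨hmem, hmono, hderiv, ⟨R, ⟨hRmem, hRfix⟩, ?_⟩, ?_⟩
  · rintro y ⟨hy, hyfix⟩
    have hyIcc : y ∈ Set.Icc (Real.sqrt n) n := ⟨hy.1.le, hy.2.le⟩
    have h := hlip y hyIcc R hRIcc
    rw [hRfix, hyfix] at h
    have h1 : 0 ≤ |R - y| := abs_nonneg _
    have h2 : |R - y| = 0 := by linarith [le_abs_self (R - y)]
    have := abs_eq_zero.mp h2
    linarith [sub_eq_zero.mp this]
  · rintro R' ⟨hR'1, hR'2⟩ hfix'
    have hR'Icc : R' ∈ Set.Icc (Real.sqrt n) n := ⟨hR'1.le, hR'2.le⟩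
    constructor
    · intro t hRt htn
      have htIcc : t ∈ Set.Icc (Real.sqrt n) n := ⟨le_trans hR'1.le hRt.le, htn⟩
      constructor
      · have := hmono hR'Icc htIcc hRt
        rwa [hfix'] at this
      · have h := hlip R' hR'Icc t htIcc
        rw [hfix', abs_of_pos (by linarith : (0:ℝ) < t - R')] at h
        have := le_abs_self (fIter n δ t - R')
        linarith
    · intro t ht1 htR
      have htIcc : t ∈ Set.Icc (Real.sqrt n) n := ⟨ht1, le_trans htR.le hR'2.le⟩
      constructor
      · have h := hlip t htIcc R' hR'Icc
        rw [hfix', abs_of_pos (by linarith : (0:ℝ) < R' - t)] at h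
        have := le_abs_self (R' - fIter n δ t)
        have := neg_abs_le (R' - fIter n δ t)
        linarith [abs_le.mp h]
      · have := hmono htIcc hR'Icc htR
        rwa [hfix'] at this
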